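/- Let a, b > 0 and let ν be the inverse Gaussian distribution IGau(√(b/a), 2b). Then the pushforward of ν under the map x ↦ 1/x is the probability measure on (0, ∞) with Lebesgue density v ↦ C · v^{−1/2} exp(−a/v − b·v), where C = (∫₀^∞ w^{−1/2} exp(−a/w − b·w) dw)^{−1} is the normalizing constant (and this integral is finite and positive). -/

import Mathlib

open MeasureTheory Real

/-- The inverse Gaussian distribution `IGau(μ, λ)`: the measure on `(0,∞)` with
Lebesgue density `x ↦ √(λ/(2πx³)) · exp(−λ(x−μ)²/(2μ²x))`. -/
noncomputable def invGaussian (μ lam : ℝ) : Measure ℝ :=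
  (volume.restrict (Set.Ioi (0 : ℝ))).withDensity
    (fun x => ENNReal.ofReal
      (Real.sqrt (lam / (2 * π * x ^ 3)) * Real.exp (-lam * (x - μ) ^ 2 / (2 * μ ^ 2 * x))))

namespace RecipIG

/-- 1-d change of variables for lower Lebesgue integrals. -/
theorem lintegral_image {s : Set ℝ} {f f' : ℝ → ℝ} (hs : MeasurableSet s)
    (hf' : ∀ x ∈ s, HasDerivWithinAt f (f' x) s x) (hf : Set.InjOn f s) (g : ℝ → ENNReal) :
    ∫⁻ x in f '' s, g x = ∫⁻ x in s, ENNReal.ofReal |f' x| * g (f x) := by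
  simpa only [ContinuousLinearMap.det_toSpanSingleton] using
    lintegral_image_eq_lintegral_abs_det_fderiv_mul volume hs
      (fun x hx => (hf' x hx).hasFDerivWithinAt) hf g

noncomputable def u (a b v : ℝ) : ℝ := Real.sqrt b * Real.sqrt v - Real.sqrt a / Real.sqrt v

lemma rpow_neg_half {x : ℝ} (hx : 0 < x) : x ^ (-(1:ℝ)/2) = (Real.sqrt x)⁻¹ := by
  rw [Real.sqrt_eq_rpow, ← Real.rpow_neg hx.le]
  norm_num

lemma rpow_neg_three_half {x : ℝ} (hx : 0 < x) : x ^ (-(3:ℝ)/2) = (x * Real.sqrt x)⁻¹ := by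
  rw [show (-(3:ℝ)/2) = -(1 + 1/2) by norm_num, Real.rpow_neg hx.le,
    Real.rpow_add hx, Real.rpow_one, ← Real.sqrt_eq_rpow]

lemma u_sq {a b : ℝ} (ha : 0 ≤ a) (hb : 0 ≤ b) {v : ℝ} (hv : 0 < v) :
    -(u a b v)^2 - 2 * Real.sqrt (a*b) = -a/v - b*v := by
  have hsv : Real.sqrt v * Real.sqrt v = v := Real.mul_self_sqrt hv.le
  have hsa : Real.sqrt a * Real.sqrt a = a := Real.mul_self_sqrt ha
  have hsb : Real.sqrt b * Real.sqrt b = b := Real.mul_self_sqrt hb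
  have hab : Real.sqrt a * Real.sqrt b = Real.sqrt (a*b) := (Real.sqrt_mul ha b).symm
  have hv' : Real.sqrt v ≠ 0 := by positivity
  rw [u]
  field_simp
  rw [sq (Real.sqrt v), hsv]
  linear_combination (-v^3) * hsb + 2 * v^2 * hab - v * hsa



lemma u_hasDeriv (a b : ℝ) {v : ℝ} (hv : 0 < v) :
    HasDerivAt (u a b)
      (Real.sqrt b / (2 * Real.sqrt v) + Real.sqrt a / (2 * (v * Real.sqrt v))) v := by
  have hsv : Real.sqrt v ≠ 0 := by positivity
  have h1 : HasDerivAt (fun x : ℝ => Real.sqrt b * Real.sqrt x)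
      (Real.sqrt b * (1 / (2 * Real.sqrt v))) v := (Real.hasDerivAt_sqrt hv.ne').const_mul _
  have h2 : HasDerivAt (fun x : ℝ => Real.sqrt a / Real.sqrt x)
      ((0 * Real.sqrt v - Real.sqrt a * (1 / (2 * Real.sqrt v))) / (Real.sqrt v) ^ 2) v :=
    (hasDerivAt_const v (Real.sqrt a)).div (Real.hasDerivAt_sqrt hv.ne') hsv
  have := h1.sub h2
  refine this.congr_deriv ?_
  have h3 : Real.sqrt v ^ 2 = v := Real.sq_sqrt hv.le
  rw [h3]
  ring

lemma u_injOn (a b : ℝ) (ha : 0 < a) : Set.InjOn (u a b) (Set.Ioi 0) := by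
  have : StrictMonoOn (u a b) (Set.Ioi 0) := by
    intro x hx y hy hxy
    have hx0 : (0:ℝ) < x := hx
    have hy0 : (0:ℝ) < y := hy
    have h1 : Real.sqrt x < Real.sqrt y := Real.sqrt_lt_sqrt hx0.le hxy
    have h2 : Real.sqrt b * Real.sqrt x ≤ Real.sqrt b * Real.sqrt y :=
      mul_le_mul_of_nonneg_left h1.le (Real.sqrt_nonneg b)
    have h3 : Real.sqrt a / Real.sqrt y < Real.sqrt a / Real.sqrt x :=
      div_lt_div_of_pos_left (Real.sqrt_pos.2 ha) (Real.sqrt_pos.2 hx0) h1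
    simp only [u]
    linarith
  exact this.injOn

lemma u_image (a b : ℝ) (ha : 0 < a) (hb : 0 < b) :
    u a b '' (Set.Ioi 0) = Set.univ := by
  apply Set.eq_univ_of_forall
  intro y
  have hab : (0:ℝ) < Real.sqrt (a*b) := Real.sqrt_pos.2 (by positivity)
  set D := Real.sqrt (y^2 + 4*Real.sqrt (a*b)) with hD
  have hD2 : D^2 = y^2 + 4*Real.sqrt (a*b) := Real.sq_sqrt (by positivity)
  have hDy : -y < D := by
    nlinarith [Real.sqrt_nonneg (y^2 + 4*Real.sqrt (a*b)), hD2]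
  have hsb : (0:ℝ) < Real.sqrt b := Real.sqrt_pos.2 hb
  set t := (y + D) / (2 * Real.sqrt b) with ht
  have ht0 : 0 < t := by
    apply div_pos (by linarith) (by linarith)
  refine ⟨t^2, Set.mem_Ioi.2 (by positivity), ?_⟩
  have hst : Real.sqrt (t^2) = t := Real.sqrt_sq ht0.le
  have hsb2 : Real.sqrt b * Real.sqrt b = b := Real.mul_self_sqrt hb.le
  have hab2 : Real.sqrt a * Real.sqrt b = Real.sqrt (a*b) := (Real.sqrt_mul ha.le b).symm
  rw [u, hst]
  have key : Real.sqrt b * t^2 - Real.sqrt a = y * t := by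
    rw [ht]
    field_simp
    ring_nf
    nlinarith [hD2, hsb2, hab2]
  field_simp [ht0.ne']
  nlinarith [key]


section
variable {a b : ℝ}

lemma integrable_h1 (ha : 0 < a) (hb : 0 < b) :
    IntegrableOn (fun v => v ^ (-(1:ℝ)/2) * Real.exp (-a/v - b*v)) (Set.Ioi 0) := by
  have base := integrableOn_rpow_mul_exp_neg_mul_rpow (p := 1) (s := -(1:ℝ)/2)
    (by norm_num) zero_lt_one hb
  simp only [Real.rpow_one] at base
  have hcont : ContinuousOn (fun v : ℝ => v ^ (-(1:ℝ)/2) * Real.exp (-a/v - b*v))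
      (Set.Ioi 0) := by
    apply ContinuousOn.mul
    · exact continuousOn_id.rpow_const (fun x hx => Or.inl (ne_of_gt hx))
    · exact (((continuousOn_const.div continuousOn_id (fun x hx => ne_of_gt hx)).sub
        (continuousOn_const.mul continuousOn_id)).rexp)
  apply base.mono' (hcont.aestronglyMeasurable measurableSet_Ioi)
  filter_upwards [ae_restrict_mem measurableSet_Ioi] with v hv
  have hv0 : (0:ℝ) < v := hv
  rw [Real.norm_eq_abs, abs_of_nonneg (by positivity)]
  apply mul_le_mul_of_nonneg_left _ (Real.rpow_nonneg hv0.le _)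
  apply Real.exp_le_exp.2
  have h1 : 0 ≤ a / v := by positivity
  have h2 : -a/v = -(a/v) := neg_div v a
  linarith

lemma T_image (ha : 0 < a) (hb : 0 < b) :
    (fun w => a/(b*w)) '' Set.Ioi 0 = Set.Ioi 0 := by
  ext x
  simp only [Set.mem_image, Set.mem_Ioi]
  constructor
  · rintro ⟨w, hw, rfl⟩; positivity
  · intro hx
    refine ⟨a/(b*x), by positivity, ?_⟩
    field_simp

lemma T_hasDeriv (hb : 0 < b) {w : ℝ} (hw : 0 < w) :
    HasDerivAt (fun w => a/(b*w)) (-(a/(b*w^2))) w := by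
  have h1 : HasDerivAt (fun w : ℝ => b*w) b w := by simpa using (hasDerivAt_id w).const_mul b
  have h2 := (hasDerivAt_const w a).div h1 (by positivity)
  refine h2.congr_deriv ?_
  rw [← neg_div, div_eq_div_iff (by positivity) (by positivity)]
  ring

lemma T_injOn (ha : 0 < a) (hb : 0 < b) :
    Set.InjOn (fun w => a/(b*w)) (Set.Ioi 0) := by
  intro x hx y hy he
  have hx0 : (0:ℝ) < x := hx
  have hy0 : (0:ℝ) < y := hy
  simp only at he
  field_simp at he
  exact he.symm

lemma P1 (ha : 0 < a) (hb : 0 < b) {w : ℝ} (hw : 0 < w) :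
    |(-(a/(b*w^2)))| • ((a/(b*w)) ^ (-(1:ℝ)/2) *
        Real.exp (-a/(a/(b*w)) - b*(a/(b*w)))) =
      Real.sqrt (a/b) * (w ^ (-(3:ℝ)/2) * Real.exp (-a/w - b*w)) := by
  have habw : (0:ℝ) < a/(b*w) := by positivity
  have harg : -a/(a/(b*w)) - b*(a/(b*w)) = -a/w - b*w := by
    field_simp
    ring
  rw [harg, smul_eq_mul, abs_neg, abs_of_pos (by positivity), rpow_neg_half habw,
    rpow_neg_three_half hw]
  have h1 : Real.sqrt (a/(b*w)) = Real.sqrt a / (Real.sqrt b * Real.sqrt w) := by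
    rw [Real.sqrt_div ha.le, Real.sqrt_mul hb.le]
  rw [h1, Real.sqrt_div ha.le]
  have hsa := Real.mul_self_sqrt ha.le
  have hsb := Real.mul_self_sqrt hb.le
  have hsw := Real.mul_self_sqrt hw.le
  have h2 : (0:ℝ) < Real.sqrt a := Real.sqrt_pos.2 ha
  have h3 : (0:ℝ) < Real.sqrt b := Real.sqrt_pos.2 hb
  have h4 : (0:ℝ) < Real.sqrt w := Real.sqrt_pos.2 hw
  have hc : a/(b*w^2) * (Real.sqrt a/(Real.sqrt b*Real.sqrt w))⁻¹ =
      Real.sqrt a/Real.sqrt b * (w*Real.sqrt w)⁻¹ := by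
    field_simp
    linear_combination (a*Real.sqrt w^2) * hsb + (a*b) * hsw - (b*w) * hsa
  calc a/(b*w^2) * ((Real.sqrt a/(Real.sqrt b*Real.sqrt w))⁻¹ * Real.exp (-a/w - b*w))
      = (a/(b*w^2) * (Real.sqrt a/(Real.sqrt b*Real.sqrt w))⁻¹) * Real.exp (-a/w - b*w) := by
        ring
    _ = (Real.sqrt a/Real.sqrt b * (w*Real.sqrt w)⁻¹) * Real.exp (-a/w - b*w) := by rw [hc]
    _ = Real.sqrt a/Real.sqrt b * ((w*Real.sqrt w)⁻¹ * Real.exp (-a/w - b*w)) := by ring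


lemma transfer (ha : 0 < a) (hb : 0 < b) :
    IntegrableOn (fun w => w ^ (-(3:ℝ)/2) * Real.exp (-a/w - b*w)) (Set.Ioi 0) ∧
    (∫ v in Set.Ioi 0, v ^ (-(1:ℝ)/2) * Real.exp (-a/v - b*v)) =
      Real.sqrt (a/b) * ∫ w in Set.Ioi 0, w ^ (-(3:ℝ)/2) * Real.exp (-a/w - b*w) := by
  have hderiv : ∀ w ∈ Set.Ioi (0:ℝ),
      HasDerivWithinAt (fun w => a/(b*w)) (-(a/(b*w^2))) (Set.Ioi 0) w :=
    fun w hw => (T_hasDeriv hb hw).hasDerivWithinAt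
  have hinj := T_injOn ha hb
  have himg := T_image ha hb
  have h1 := integrable_h1 ha hb
  have heq : Set.EqOn (fun w => |(-(a/(b*w^2)))| •
        ((a/(b*w)) ^ (-(1:ℝ)/2) * Real.exp (-a/(a/(b*w)) - b*(a/(b*w)))))
      (fun w => Real.sqrt (a/b) * (w ^ (-(3:ℝ)/2) * Real.exp (-a/w - b*w)))
      (Set.Ioi 0) := fun w hw => P1 ha hb hw
  have hne : Real.sqrt (a/b) ≠ 0 := by positivity
  constructor
  · have h2 := (integrableOn_image_iff_integrableOn_abs_deriv_smul measurableSet_Ioi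
      hderiv hinj (fun v => v ^ (-(1:ℝ)/2) * Real.exp (-a/v - b*v))).mp (by rwa [himg])
    have h3 : IntegrableOn
        (fun w => Real.sqrt (a/b) * (w ^ (-(3:ℝ)/2) * Real.exp (-a/w - b*w)))
        (Set.Ioi 0) := h2.congr_fun heq measurableSet_Ioi
    exact (integrable_const_mul_iff (isUnit_iff_ne_zero.2 hne) _).mp h3
  · calc ∫ v in Set.Ioi (0:ℝ), v ^ (-(1:ℝ)/2) * Real.exp (-a/v - b*v)
        = ∫ v in (fun w => a/(b*w)) '' Set.Ioi 0,
            v ^ (-(1:ℝ)/2) * Real.exp (-a/v - b*v) := by rw [himg]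
      _ = ∫ w in Set.Ioi (0:ℝ), |(-(a/(b*w^2)))| •
            ((a/(b*w)) ^ (-(1:ℝ)/2) * Real.exp (-a/(a/(b*w)) - b*(a/(b*w)))) :=
          integral_image_eq_integral_abs_deriv_smul measurableSet_Ioi hderiv hinj _
      _ = ∫ w in Set.Ioi (0:ℝ),
            Real.sqrt (a/b) * (w ^ (-(3:ℝ)/2) * Real.exp (-a/w - b*w)) :=
          setIntegral_congr_fun measurableSet_Ioi heq
      _ = Real.sqrt (a/b) * ∫ w in Set.Ioi 0,
            w ^ (-(3:ℝ)/2) * Real.exp (-a/w - b*w) := integral_const_mul _ _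

lemma gauss_eq (ha : 0 < a) (hb : 0 < b) :
    ∫ v in Set.Ioi (0:ℝ),
      |Real.sqrt b / (2*Real.sqrt v) + Real.sqrt a / (2*(v*Real.sqrt v))| •
        Real.exp (-(u a b v)^2) = Real.sqrt π := by
  have hg : ∫ x : ℝ, Real.exp (-x^2) = Real.sqrt π := by
    simpa using integral_gaussian 1
  calc ∫ v in Set.Ioi (0:ℝ),
        |Real.sqrt b / (2*Real.sqrt v) + Real.sqrt a / (2*(v*Real.sqrt v))| •
          Real.exp (-(u a b v)^2)
      = ∫ x in u a b '' Set.Ioi 0, Real.exp (-x^2) :=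
        (integral_image_eq_integral_abs_deriv_smul measurableSet_Ioi
          (fun v hv => (u_hasDeriv a b hv).hasDerivWithinAt) (u_injOn a b ha)
          (fun x => Real.exp (-x^2))).symm
    _ = ∫ x : ℝ, Real.exp (-x^2) := by rw [u_image a b ha hb, Measure.restrict_univ]
    _ = Real.sqrt π := hg

lemma integral_h (ha : 0 < a) (hb : 0 < b) :
    ∫ v in Set.Ioi (0:ℝ), v ^ (-(1:ℝ)/2) * Real.exp (-a/v - b*v) =
      Real.sqrt (π/b) * Real.exp (-(2*Real.sqrt (a*b))) := by
  obtain ⟨h2int, hrel⟩ := transfer ha hb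
  have h1 := integrable_h1 ha hb
  have hgauss := gauss_eq ha hb
  have hpt : Set.EqOn
      (fun v => |Real.sqrt b / (2*Real.sqrt v) + Real.sqrt a / (2*(v*Real.sqrt v))| •
        Real.exp (-(u a b v)^2))
      (fun v => Real.exp (2*Real.sqrt (a*b)) *
        ((Real.sqrt b/2) * (v ^ (-(1:ℝ)/2) * Real.exp (-a/v - b*v)) +
         (Real.sqrt a/2) * (v ^ (-(3:ℝ)/2) * Real.exp (-a/v - b*v))))
      (Set.Ioi 0) := by
    intro v hv
    have hv0 : (0:ℝ) < v := hv
    have hsv : (0:ℝ) < Real.sqrt v := Real.sqrt_pos.2 hv0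
    have he : Real.exp (-(u a b v)^2) =
        Real.exp (2*Real.sqrt (a*b)) * Real.exp (-a/v - b*v) := by
      rw [← Real.exp_add]
      congr 1
      have := u_sq ha.le hb.le hv0
      linarith
    simp only
    rw [abs_of_pos (by positivity), he, rpow_neg_half hv0, rpow_neg_three_half hv0,
      smul_eq_mul]
    field_simp
  rw [setIntegral_congr_fun measurableSet_Ioi hpt, integral_const_mul,
    integral_add (h1.const_mul _) (h2int.const_mul _), integral_const_mul,
    integral_const_mul] at hgauss
  set I1 := ∫ v in Set.Ioi (0:ℝ), v ^ (-(1:ℝ)/2) * Real.exp (-a/v - b*v) with hI1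
  set I2 := ∫ w in Set.Ioi (0:ℝ), w ^ (-(3:ℝ)/2) * Real.exp (-a/w - b*w) with hI2
  have hba : Real.sqrt b * Real.sqrt (a/b) = Real.sqrt a := by
    rw [← Real.sqrt_mul hb.le]
    congr 1
    field_simp
  have hs : Real.sqrt a * I2 = Real.sqrt b * I1 := by
    linear_combination (-I2) * hba + (-(Real.sqrt b)) * hrel
  have h5 : Real.exp (2*Real.sqrt (a*b)) * (Real.sqrt b * I1) = Real.sqrt π := by
    linear_combination hgauss + (-(Real.exp (2*Real.sqrt (a*b))/2)) * hs
  have hsb : (0:ℝ) < Real.sqrt b := Real.sqrt_pos.2 hb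
  have hexp : (0:ℝ) < Real.exp (2*Real.sqrt (a*b)) := Real.exp_pos _
  rw [Real.sqrt_div pi_pos.le, Real.exp_neg]
  have hab2 : Real.sqrt a * Real.sqrt b = Real.sqrt (a*b) := (Real.sqrt_mul ha.le b).symm
  field_simp
  linear_combination h5


lemma P3 (ha : 0 < a) (hb : 0 < b) {v : ℝ} (hv : 0 < v) :
    |(-(v^2)⁻¹)| * (Real.sqrt (2*b / (2*π*(1/v)^3)) *
      Real.exp (-(2*b) * (1/v - Real.sqrt (b/a))^2 / (2*(Real.sqrt (b/a))^2 * (1/v)))) =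
    (Real.sqrt (π/b) * Real.exp (-(2*Real.sqrt (a*b))))⁻¹ *
      (v ^ (-(1:ℝ)/2) * Real.exp (-a/v - b*v)) := by
  have hμ2 : (Real.sqrt (b/a))^2 = b/a := Real.sq_sqrt (by positivity)
  have haμ : a * Real.sqrt (b/a) = Real.sqrt (a*b) := by
    rw [show a*b = a^2*(b/a) by field_simp, Real.sqrt_mul (by positivity) _,
      Real.sqrt_sq ha.le]
  have hμ0 : (0:ℝ) < Real.sqrt (b/a) := Real.sqrt_pos.2 (by positivity)
  have hexp : -(2*b) * (1/v - Real.sqrt (b/a))^2 / (2*(Real.sqrt (b/a))^2 * (1/v))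
      = -a/v - b*v + 2*Real.sqrt (a*b) := by
    rw [hμ2]
    have hsa := Real.mul_self_sqrt ha.le
    have hsb := Real.mul_self_sqrt hb.le
    field_simp
    have hμ2' : a * Real.sqrt (b/a)^2 = b := by rw [hμ2]; field_simp
    rw [mul_comm b a]
    linear_combination (-v^2) * hμ2' + 2*v * haμ
  have hsv : (0:ℝ) < Real.sqrt v := Real.sqrt_pos.2 hv
  have hsq : Real.sqrt (2*b/(2*π*(1/v)^3)) = Real.sqrt (b/π) * (v * Real.sqrt v) := by
    rw [show 2*b/(2*π*(1/v)^3) = (b/π) * v^3 by field_simp,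
      Real.sqrt_mul (by positivity) _,
      show v^3 = (v*Real.sqrt v)^2 by rw [mul_pow, Real.sq_sqrt hv.le]; ring,
      Real.sqrt_sq (by positivity)]
  have hconst : (Real.sqrt (π/b))⁻¹ = Real.sqrt (b/π) := by
    rw [← Real.sqrt_inv, inv_div]
  rw [hsq, hexp, rpow_neg_half hv, Real.exp_add, abs_neg, abs_of_pos (by positivity),
    mul_inv, hconst, Real.exp_neg, inv_inv]
  have hvv := Real.mul_self_sqrt hv.le
  field_simp
  linear_combination hvv

end

open RecipIG in
theorem reciprocal_of_inverse_gaussian_density'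
    (a b : ℝ) (ha : 0 < a) (hb : 0 < b)
    (h : ℝ → ℝ) (hh : ∀ v, h v = v ^ (-(1 : ℝ) / 2) * Real.exp (-a / v - b * v)) :
    (0 < ∫ w in Set.Ioi (0 : ℝ), h w) ∧
    IntegrableOn h (Set.Ioi (0 : ℝ)) ∧
    Measure.map (fun x => 1 / x) ((volume.restrict (Set.Ioi (0 : ℝ))).withDensity
      (fun x => ENNReal.ofReal
        (Real.sqrt (2*b / (2 * π * x ^ 3)) *
          Real.exp (-(2*b) * (x - Real.sqrt (b/a)) ^ 2 / (2 * (Real.sqrt (b/a)) ^ 2 * x))))) =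
      (volume.restrict (Set.Ioi (0 : ℝ))).withDensity
        (fun v => ENNReal.ofReal ((∫ w in Set.Ioi (0 : ℝ), h w)⁻¹ * h v)) := by
  have hfun : h = fun v => v ^ (-(1:ℝ)/2) * Real.exp (-a/v - b*v) := funext hh
  subst hfun
  have hint := integral_h ha hb
  have hpos : (0:ℝ) < Real.sqrt (π/b) * Real.exp (-(2*Real.sqrt (a*b))) := by positivity
  refine ⟨by rw [hint]; exact hpos, integrable_h1 ha hb, ?_⟩
  have hm : Measurable fun x : ℝ => 1/x := by
    simpa [one_div] using (measurable_inv : Measurable fun x : ℝ => x⁻¹)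
  ext A hA
  rw [Measure.map_apply hm hA, withDensity_apply _ (hm hA), withDensity_apply _ hA,
    Measure.restrict_restrict (hm hA), Measure.restrict_restrict hA]
  have hset : (fun x : ℝ => 1/x) ⁻¹' A ∩ Set.Ioi 0 = (fun v : ℝ => 1/v) '' (A ∩ Set.Ioi 0) := by
    ext x
    constructor
    · rintro ⟨hxA, hx0⟩
      have hx0' : (0:ℝ) < x := hx0
      exact ⟨1/x, ⟨hxA, Set.mem_Ioi.2 (by positivity)⟩, by field_simp⟩
    · rintro ⟨v, ⟨hvA, hv0⟩, rfl⟩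
      have hv0' : (0:ℝ) < v := hv0
      refine ⟨?_, Set.mem_Ioi.2 (by positivity)⟩
      simpa [Set.mem_preimage, one_div, inv_inv] using hvA
  rw [hset, lintegral_image (hA.inter measurableSet_Ioi)
    (fun v hv => (show HasDerivAt (fun y:ℝ => 1/y) (-(v^2)⁻¹) v by
      simpa [one_div] using hasDerivAt_inv (ne_of_gt hv.2)).hasDerivWithinAt)
    (fun x _ y _ e => by rw [one_div, one_div] at e; exact inv_injective e) _]
  apply setLIntegral_congr_fun (hA.inter measurableSet_Ioi)
  intro v hv
  have hv0 : (0:ℝ) < v := hv.2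
  dsimp only
  rw [← ENNReal.ofReal_mul (abs_nonneg _), hint]
  congr 1
  exact P3 ha hb hv0

end RecipIG

theorem reciprocal_of_inverse_gaussian_density
    (a b : ℝ) (ha : 0 < a) (hb : 0 < b)
    (h : ℝ → ℝ) (hh : ∀ v, h v = v ^ (-(1 : ℝ) / 2) * Real.exp (-a / v - b * v)) :
    (0 < ∫ w in Set.Ioi (0 : ℝ), h w) ∧
    IntegrableOn h (Set.Ioi (0 : ℝ)) ∧
    Measure.map (fun x => 1 / x) (invGaussian (Real.sqrt (b / a)) (2 * b)) =
      (volume.restrict (Set.Ioi (0 : ℝ))).withDensity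
        (fun v => ENNReal.ofReal ((∫ w in Set.Ioi (0 : ℝ), h w)⁻¹ * h v)) := by
  rw [invGaussian]
  exact RecipIG.reciprocal_of_inverse_gaussian_density' a b ha hb h hh |>.2.2 |>
    (fun hmap => ⟨(RecipIG.reciprocal_of_inverse_gaussian_density' a b ha hb h hh).1,
      (RecipIG.reciprocal_of_inverse_gaussian_density' a b ha hb h hh).2.1, hmap⟩)
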